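/- The two-layer mean-field free energy at ε = 0, namely f̂₀(m₁,m₂) = −m₁²/2 − I(m₁) − m₂²/2 − I(m₂) with entropy I(m) = −((1−m)/2)log((1−m)/2) − ((1+m)/2)log((1+m)/2), satisfies f̂₀(m₁,m₂) ≥ f̂₀(0,0) + c(m₁⁴ + m₂⁴) for some constant c > 0 and all m₁, m₂ ∈ [−1,1]. -/

import Mathlib

noncomputable def entI (m : ℝ) : ℝ :=
  -((1 - m) / 2 * Real.log ((1 - m) / 2)) - (1 + m) / 2 * Real.log ((1 + m) / 2)

noncomputable def fHat₀ (m₁ m₂ : ℝ) : ℝ :=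
  -m₁ ^ 2 / 2 - entI m₁ - m₂ ^ 2 / 2 - entI m₂

open Real Set

/-- F(u) = log(1+u) - (u - u²/2 + u³/3 - u⁴/4) -/
noncomputable def Faux (u : ℝ) : ℝ :=
  Real.log (1 + u) - (u - u^2/2 + u^3/3 - u^4/4)

lemma Faux_hasDeriv {u : ℝ} (hu : -1 < u) :
    HasDerivAt Faux (u^4 / (1+u)) u := by
  have h1 : (1:ℝ) + u ≠ 0 := by linarith
  have hlog : HasDerivAt (fun x : ℝ => Real.log (1 + x)) (1/(1+u)) u := by
    have := (Real.hasDerivAt_log h1).comp u ((hasDerivAt_id u).const_add 1)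
    simpa [Function.comp_def] using this
  have hpoly : HasDerivAt (fun x : ℝ => x - x^2/2 + x^3/3 - x^4/4)
      (1 - u + u^2 - u^3) u := by
    have : HasDerivAt (fun x : ℝ => x - x^2/2 + x^3/3 - x^4/4)
        (1 - (2*u^1)/2 + (3*u^2)/3 - (4*u^3)/4) u := by
      exact (((hasDerivAt_id u).sub ((hasDerivAt_pow 2 u).div_const 2)).add
        ((hasDerivAt_pow 3 u).div_const 3)).sub ((hasDerivAt_pow 4 u).div_const 4)
    convert this using 1; ring
  have := hlog.sub hpoly
  refine HasDerivAt.congr_deriv this ?_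
  field_simp
  ring

lemma Faux_cont : ContinuousOn Faux (Ioi (-1:ℝ)) := by
  intro x hx
  exact (Faux_hasDeriv hx).continuousAt.continuousWithinAt

lemma Faux_nonneg {u : ℝ} (hu : 0 ≤ u) : 0 ≤ Faux u := by
  have h0 : Faux 0 = 0 := by simp [Faux]
  have hmono : MonotoneOn Faux (Icc 0 u) := by
    apply monotoneOn_of_deriv_nonneg (convex_Icc 0 u)
    · exact Faux_cont.mono (fun x hx => by simp at hx ⊢; linarith [hx.1])
    · intro x hx
      simp only [interior_Icc, mem_Ioo] at hx
      exact ((Faux_hasDeriv (by linarith [hx.1])).differentiableAt).differentiableWithinAt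
    · intro x hx
      simp only [interior_Icc, mem_Ioo] at hx
      rw [(Faux_hasDeriv (by linarith [hx.1])).deriv]
      have : (0:ℝ) < 1 + x := by linarith [hx.1]
      positivity
  calc (0:ℝ) = Faux 0 := h0.symm
    _ ≤ Faux u := hmono (by simp [hu]) (by simp [hu, le_refl]) hu

lemma Faux_nonpos {u : ℝ} (hu1 : -1 < u) (hu : u ≤ 0) : Faux u ≤ 0 := by
  have h0 : Faux 0 = 0 := by simp [Faux]
  have hmono : MonotoneOn Faux (Icc u 0) := by
    apply monotoneOn_of_deriv_nonneg (convex_Icc u 0)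
    · exact Faux_cont.mono (fun x hx => by simp at hx ⊢; linarith [hx.1])
    · intro x hx
      simp only [interior_Icc, mem_Ioo] at hx
      exact ((Faux_hasDeriv (by linarith [hx.1])).differentiableAt).differentiableWithinAt
    · intro x hx
      simp only [interior_Icc, mem_Ioo] at hx
      rw [(Faux_hasDeriv (by linarith [hx.1])).deriv]
      have : (0:ℝ) < 1 + x := by linarith [hx.1]
      positivity
  calc Faux u ≤ Faux 0 := hmono (by simp [hu]) (by simp [hu]) hu
    _ = 0 := h0

/-- ψ(u) = (1+u)log(1+u) - (u + u²/2 - u³/6 + u⁴/12 - u⁵/20) -/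
noncomputable def psiAux (u : ℝ) : ℝ :=
  (1+u) * Real.log (1+u) - (u + u^2/2 - u^3/6 + u^4/12 - u^5/20)

lemma psiAux_cont : Continuous psiAux := by
  have h1 : Continuous fun u : ℝ => (1+u) * Real.log (1+u) := by
    have h := Real.continuous_mul_log.comp (continuous_const.add continuous_id : Continuous fun u : ℝ => 1 + u)
    exact h
  exact h1.sub (by continuity)

lemma psiAux_hasDeriv {u : ℝ} (hu : -1 < u) :
    HasDerivAt psiAux (Faux u) u := by
  have h1 : (0:ℝ) < 1 + u := by linarith
  have hlog : HasDerivAt (fun x : ℝ => Real.log (1 + x)) (1/(1+u)) u := by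
    have := (Real.hasDerivAt_log (by linarith : (1:ℝ)+u ≠ 0)).comp u
      ((hasDerivAt_id u).const_add 1)
    simpa [Function.comp_def] using this
  have hid : HasDerivAt (fun x : ℝ => 1 + x) 1 u := (hasDerivAt_id u).const_add 1
  have hml : HasDerivAt (fun x : ℝ => (1+x) * Real.log (1+x))
      (1 * Real.log (1+u) + (1+u) * (1/(1+u))) u := hid.mul hlog
  have hpoly : HasDerivAt (fun x : ℝ => x + x^2/2 - x^3/6 + x^4/12 - x^5/20)
      (1 + (2*u^1)/2 - (3*u^2)/6 + (4*u^3)/12 - (5*u^4)/20) u := by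
    exact ((((hasDerivAt_id u).add ((hasDerivAt_pow 2 u).div_const 2)).sub
      ((hasDerivAt_pow 3 u).div_const 6)).add ((hasDerivAt_pow 4 u).div_const 12)).sub
      ((hasDerivAt_pow 5 u).div_const 20)
  have := hml.sub hpoly
  refine HasDerivAt.congr_deriv this ?_
  unfold Faux
  field_simp
  ring

lemma psiAux_nonneg {u : ℝ} (hu1 : -1 ≤ u) (hu2 : u ≤ 1) : 0 ≤ psiAux u := by
  have h0 : psiAux 0 = 0 := by simp [psiAux]
  rcases le_or_gt 0 u with h | h
  · have hmono : MonotoneOn psiAux (Icc 0 u) := by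
      apply monotoneOn_of_deriv_nonneg (convex_Icc 0 u) psiAux_cont.continuousOn
      · intro x hx
        simp only [interior_Icc, mem_Ioo] at hx
        exact ((psiAux_hasDeriv (by linarith [hx.1])).differentiableAt).differentiableWithinAt
      · intro x hx
        simp only [interior_Icc, mem_Ioo] at hx
        rw [(psiAux_hasDeriv (by linarith [hx.1])).deriv]
        exact Faux_nonneg (le_of_lt hx.1)
    calc (0:ℝ) = psiAux 0 := h0.symm
      _ ≤ psiAux u := hmono (by simp [h]) (by simp [h]) h
  · have hanti : AntitoneOn psiAux (Icc u 0) := by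
      apply antitoneOn_of_deriv_nonpos (convex_Icc u 0) psiAux_cont.continuousOn
      · intro x hx
        simp only [interior_Icc, mem_Ioo] at hx
        exact ((psiAux_hasDeriv (by linarith [hx.1])).differentiableAt).differentiableWithinAt
      · intro x hx
        simp only [interior_Icc, mem_Ioo] at hx
        rw [(psiAux_hasDeriv (by linarith [hx.1])).deriv]
        exact Faux_nonpos (by linarith [hx.1]) (le_of_lt hx.2)
    calc (0:ℝ) = psiAux 0 := h0.symm
      _ ≤ psiAux u := hanti (by simp [h.le]) (by simp [h.le, le_refl]) h.le

/-- core: (1+m)log(1+m) + (1-m)log(1-m) ≥ m² + m⁴/6 -/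
lemma core (m : ℝ) (h1 : -1 ≤ m) (h2 : m ≤ 1) :
    m^2 + m^4/6 ≤ (1+m) * Real.log (1+m) + (1-m) * Real.log (1-m) := by
  have hp := psiAux_nonneg h1 h2
  have hm := psiAux_nonneg (by linarith : -1 ≤ -m) (by linarith : -m ≤ 1)
  unfold psiAux at hp hm
  have : (1 + -m) = 1 - m := by ring
  rw [this] at hm
  nlinarith [hp, hm]

lemma half_log_half (x : ℝ) (hx : 0 ≤ x) :
    x/2 * Real.log (x/2) = x/2 * Real.log x - x/2 * Real.log 2 := by
  rcases eq_or_lt_of_le hx with h | h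
  · simp [← h]
  · rw [Real.log_div (ne_of_gt h) two_ne_zero]; ring

lemma percoord (m : ℝ) (h1 : -1 ≤ m) (h2 : m ≤ 1) :
    -m^2/2 - entI m ≥ -entI 0 + (1/12) * m^4 := by
  have hA := half_log_half (1-m) (by linarith)
  have hB := half_log_half (1+m) (by linarith)
  have hcore := core m h1 h2
  have hlh : Real.log ((1:ℝ)/2) = -Real.log 2 := by
    rw [Real.log_div one_ne_zero two_ne_zero]; simp
  unfold entI
  simp only [show ((1:ℝ)-0)/2 = 1/2 by norm_num, show ((1:ℝ)+0)/2 = 1/2 by norm_num, hlh]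
  have e1 : (1-m)/2 * Real.log ((1-m)/2) = (1-m)/2 * Real.log (1-m) - (1-m)/2 * Real.log 2 := hA
  have e2 : (1+m)/2 * Real.log ((1+m)/2) = (1+m)/2 * Real.log (1+m) - (1+m)/2 * Real.log 2 := hB
  rw [e1, e2]
  nlinarith [hcore]

theorem fHat₀_quartic_lower_bound :
    ∃ c > (0:ℝ), ∀ m₁ ∈ Set.Icc (-1:ℝ) 1, ∀ m₂ ∈ Set.Icc (-1:ℝ) 1,
      fHat₀ m₁ m₂ ≥ fHat₀ 0 0 + c * (m₁ ^ 4 + m₂ ^ 4) := by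
  refine ⟨1/12, by norm_num, ?_⟩
  intro m₁ hm₁ m₂ hm₂
  have h1 := percoord m₁ hm₁.1 hm₁.2
  have h2 := percoord m₂ hm₂.1 hm₂.2
  unfold fHat₀
  nlinarith [h1, h2]
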